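/- For each i ∈ {1,2,…,m−2}, let T_{i,i+1} = min{n : A_i(n)·A_{i+1}(n) = 0}. Then E[T_{i,i+1}] = m·a_i·a_{i+1}. -/

import Mathlib

open MeasureTheory ProbabilityTheory Filter
open scoped ENNReal
open scoped Topology
set_option maxHeartbeats 1000000

/-- The `m` possible step vectors of the competition process on the `m - 1` gaps
(0-indexed): `step m 0 = -e₀`, `step m k = e_{k-1} - e_k` for `0 < k < m - 1`, and
`step m (m-1) = e_{m-2}`. -/
def step (m : ℕ) (k : Fin m) : Fin (m - 1) → ℤ := fun j =>
  (if (j : ℕ) + 1 = (k : ℕ) then 1 else 0) - (if (j : ℕ) = (k : ℕ) then 1 else 0)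

lemma step_bd (m : ℕ) (k : Fin m) (j : Fin (m-1)) : |step m k j| ≤ 1 := by
  unfold step; split_ifs <;> norm_num

lemma step_inj (m : ℕ) (hm : 3 ≤ m) : Function.Injective (step m) := by
  intro k k' h
  by_contra hne
  -- wlog k < k'
  rcases lt_or_gt_of_ne (fun hh => hne hh) with hlt | hlt
  · have hk : (k:ℕ) < m - 1 := by have := k'.2; omega
    have := congrFun h ⟨k, hk⟩
    simp only [step] at this
    split_ifs at this <;> omega
  · have hk : (k':ℕ) < m - 1 := by have := k.2; omega
    have := congrFun h ⟨k', hk⟩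
    simp only [step] at this
    split_ifs at this <;> omega

-- sum of single indicator
lemma sum_ind (m c : ℕ) (hc : c < m) : ∑ k : Fin m, (if c = (k:ℕ) then (1:ℤ) else 0) = 1 := by
  rw [Finset.sum_eq_single (⟨c, hc⟩ : Fin m)]
  · simp
  · intro b _ hb
    rw [if_neg]
    intro h
    exact hb (Fin.ext (by simp only [Fin.val_mk]; omega))
  · simp

lemma sumP (m : ℕ) (i j : Fin (m-1)) (hij : (j:ℕ) = (i:ℕ) + 1) (x : Fin (m-1) → ℤ) :
    ∑ k : Fin m, ((x + step m k) i * (x + step m k) j) = m * (x i * x j) - 1 := by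
  have hi : (i:ℕ) < m := by have := i.2; omega
  have hi1 : (i:ℕ) + 1 < m := by have := j.2; omega
  have hi2 : (i:ℕ) + 2 < m := by have := j.2; omega
  set u : Fin m → ℤ := fun k => (if (i:ℕ)+1 = (k:ℕ) then 1 else 0) - (if (i:ℕ) = (k:ℕ) then 1 else 0) with hu
  set v : Fin m → ℤ := fun k => (if (j:ℕ)+1 = (k:ℕ) then 1 else 0) - (if (j:ℕ) = (k:ℕ) then 1 else 0) with hv
  have huv : ∀ k, u k * v k = -(if (j:ℕ) = (k:ℕ) then 1 else 0) := by
    intro k; simp only [hu, hv]; split_ifs <;> first | (exfalso; omega) | norm_num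
  have happ : ∀ k : Fin m, (x + step m k) i = x i + u k ∧ (x + step m k) j = x j + v k := by
    intro k; constructor <;> rfl
  have hexp : ∀ k : Fin m, (x + step m k) i * (x + step m k) j
      = x i * x j + x i * v k + x j * u k + u k * v k := by
    intro k; rw [(happ k).1, (happ k).2]; ring
  rw [Finset.sum_congr rfl (fun k _ => hexp k)]
  have hsu : ∑ k : Fin m, u k = 0 := by
    simp only [hu, Finset.sum_sub_distrib, sum_ind m _ hi1, sum_ind m _ hi]; ring
  have hsv : ∑ k : Fin m, v k = 0 := by
    have h1 : (j:ℕ) + 1 < m := by omega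
    have h2 : (j:ℕ) < m := by omega
    simp only [hv, Finset.sum_sub_distrib, sum_ind m _ h1, sum_ind m _ h2]; ring
  have hsuv : ∑ k : Fin m, u k * v k = -1 := by
    rw [Finset.sum_congr rfl (fun k _ => huv k), Finset.sum_neg_distrib]
    rw [sum_ind m _ (by omega : (j:ℕ) < m)]
  simp only [Finset.sum_add_distrib, ← Finset.mul_sum, hsu, hsv, hsuv,
    Finset.sum_const, Finset.card_univ, Fintype.card_fin]
  push_cast; ring

lemma sumQ (m : ℕ) (i j : Fin (m-1)) (hij : (j:ℕ) = (i:ℕ) + 1) (x : Fin (m-1) → ℤ) :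
    ∑ k : Fin m, ((x + step m k) i * (x + step m k) j * ((x + step m k) i + (x + step m k) j))
      = m * (x i * x j * (x i + x j)) := by
  have hi : (i:ℕ) < m := by have := i.2; omega
  have hi1 : (i:ℕ) + 1 < m := by have := j.2; omega
  have hi2 : (i:ℕ) + 2 < m := by have := j.2; omega
  set u : Fin m → ℤ := fun k => (if (i:ℕ)+1 = (k:ℕ) then 1 else 0) - (if (i:ℕ) = (k:ℕ) then 1 else 0) with hu
  set v : Fin m → ℤ := fun k => (if (j:ℕ)+1 = (k:ℕ) then 1 else 0) - (if (j:ℕ) = (k:ℕ) then 1 else 0) with hv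
  have huv : ∀ k, u k * v k = -(if (j:ℕ) = (k:ℕ) then 1 else 0) := by
    intro k; simp only [hu, hv]; split_ifs <;> first | (exfalso; omega) | norm_num
  have huu : ∀ k, u k * u k = (if (i:ℕ)+1 = (k:ℕ) then 1 else 0) + (if (i:ℕ) = (k:ℕ) then 1 else 0) := by
    intro k; simp only [hu]; split_ifs <;> first | (exfalso; omega) | norm_num
  have hvv : ∀ k, v k * v k = (if (j:ℕ)+1 = (k:ℕ) then 1 else 0) + (if (j:ℕ) = (k:ℕ) then 1 else 0) := by
    intro k; simp only [hv]; split_ifs <;> first | (exfalso; omega) | norm_num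
  have huuv : ∀ k, u k * u k * v k = -(if (j:ℕ) = (k:ℕ) then 1 else 0) := by
    intro k; simp only [hu, hv]; split_ifs <;> first | (exfalso; omega) | norm_num
  have huvv : ∀ k, u k * v k * v k = (if (j:ℕ) = (k:ℕ) then 1 else 0) := by
    intro k; simp only [hu, hv]; split_ifs <;> first | (exfalso; omega) | norm_num
  have happ : ∀ k : Fin m, (x + step m k) i = x i + u k ∧ (x + step m k) j = x j + v k := by
    intro k; constructor <;> rfl
  have hexp : ∀ k : Fin m, (x + step m k) i * (x + step m k) j * ((x + step m k) i + (x + step m k) j)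
      = x i * x j * (x i + x j) + (x i * x j + x j * (x i + x j)) * u k
        + (x i * x j + x i * (x i + x j)) * v k + x j * (u k * u k) + x i * (v k * v k)
        + (x i + x j + (x i + x j)) * (u k * v k) + u k * u k * v k + u k * v k * v k := by
    intro k; rw [(happ k).1, (happ k).2]; ring
  rw [Finset.sum_congr rfl (fun k _ => hexp k)]
  have hsu : ∑ k : Fin m, u k = 0 := by
    simp only [hu, Finset.sum_sub_distrib, sum_ind m _ hi1, sum_ind m _ hi]; ring
  have hsv : ∑ k : Fin m, v k = 0 := by
    simp only [hv, Finset.sum_sub_distrib, sum_ind m _ (show (j:ℕ)+1 < m by omega),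
      sum_ind m _ (show (j:ℕ) < m by omega)]; ring
  have hsuv : ∑ k : Fin m, u k * v k = -1 := by
    rw [Finset.sum_congr rfl (fun k _ => huv k), Finset.sum_neg_distrib,
      sum_ind m _ (show (j:ℕ) < m by omega)]
  have hsuu : ∑ k : Fin m, u k * u k = 2 := by
    rw [Finset.sum_congr rfl (fun k _ => huu k), Finset.sum_add_distrib,
      sum_ind m _ hi1, sum_ind m _ hi]; norm_num
  have hsvv : ∑ k : Fin m, v k * v k = 2 := by
    rw [Finset.sum_congr rfl (fun k _ => hvv k), Finset.sum_add_distrib,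
      sum_ind m _ (show (j:ℕ)+1 < m by omega), sum_ind m _ (show (j:ℕ) < m by omega)]; norm_num
  have hsuuv : ∑ k : Fin m, u k * u k * v k = -1 := by
    rw [Finset.sum_congr rfl (fun k _ => huuv k), Finset.sum_neg_distrib,
      sum_ind m _ (show (j:ℕ) < m by omega)]
  have hsuvv : ∑ k : Fin m, u k * v k * v k = 1 := by
    rw [Finset.sum_congr rfl (fun k _ => huvv k), sum_ind m _ (show (j:ℕ) < m by omega)]
  simp only [Finset.sum_add_distrib, ← Finset.mul_sum, hsu, hsv, hsuv, hsuu, hsvv, hsuuv, hsuvv,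
    Finset.sum_const, Finset.card_univ, Fintype.card_fin]
  have : (j:ℤ) = (i:ℤ) + 1 := by exact_mod_cast hij
  push_cast
  ring


/-- For each adjacent pair `i, j = i + 1`, the expected value of the
stopping time `T_{i,i+1} = min {n : A_i n * A_{i+1} n = 0}` equals `m * a_i * a_{i+1}`. -/
theorem stmt_13 (m : ℕ) (hm : 3 ≤ m)
{Ω : Type*} [MeasurableSpace Ω] (μ : Measure Ω) [IsProbabilityMeasure μ]
    (a : Fin (m - 1) → ℕ) (ha : ∀ k, 0 < a k)
    (ξ : ℕ → Ω → (Fin (m - 1) → ℤ))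
    (hmeas : ∀ n, Measurable (ξ n))
    (hindep : iIndepFun ξ μ)
    (hunif : ∀ n (k : Fin m), μ {ω | ξ n ω = step m k} = 1 / m)
    (A : ℕ → Ω → (Fin (m - 1) → ℤ))
    (hA0 : ∀ ω j, A 0 ω j = (a j : ℤ))
    (hA : ∀ n ω, A (n + 1) ω = A n ω + ξ n ω)
    (i j : Fin (m - 1)) (hij : (j : ℕ) = (i : ℕ) + 1)
    (T : Ω → ℕ)
    (hT : ∀ ω, T ω = sInf {n | A n ω i * A n ω j = 0}) :
    ∫⁻ ω, (T ω : ℝ≥0∞) ∂μ = ((m * a i * a j : ℕ) : ℝ≥0∞) := by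
  classical
  have hmR : (0:ℝ) < m := by positivity
  have hmR' : (m:ℝ) ≠ 0 := ne_of_gt hmR
  -- measurability of A
  have hAmeas : ∀ n, Measurable (A n) := by
    intro n; induction n with
    | zero =>
      have h0 : A 0 = fun _ => fun j' => (a j' : ℤ) :=
        funext fun ω => funext fun j' => hA0 ω j'
      rw [h0]; exact measurable_const
    | succ n ih =>
      have h1 : A (n+1) = fun ω => A n ω + ξ n ω := funext fun ω => hA n ω
      rw [h1]
      exact measurable_pi_iff.mpr fun j' =>
        ((measurable_pi_apply j').comp ih).add ((measurable_pi_apply j').comp (hmeas n))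
  have hAsum : ∀ n ω, A n ω = (fun j' => (a j' : ℤ)) + ∑ l ∈ Finset.range n, ξ l ω := by
    intro n; induction n with
    | zero => intro ω; funext j'; simpa using hA0 ω j'
    | succ n ih =>
      intro ω; rw [hA n ω, ih ω]; funext j'
      simp [Finset.sum_range_succ]
      ring
  set P : ℕ → Ω → ℤ := fun n ω => A n ω i * A n ω j with hPdef
  set Q : ℕ → Ω → ℤ := fun n ω => A n ω i * A n ω j * (A n ω i + A n ω j) with hQdef
  have hPmeas : ∀ n, Measurable (P n) :=
    fun n => ((measurable_pi_apply i).comp (hAmeas n)).mul ((measurable_pi_apply j).comp (hAmeas n))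
  have hQmeas : ∀ n, Measurable (Q n) :=
    fun n => (hPmeas n).mul (((measurable_pi_apply i).comp (hAmeas n)).add ((measurable_pi_apply j).comp (hAmeas n)))
  set G : ℕ → Set Ω := fun n => {ω | ∀ k ≤ n, P k ω ≠ 0} with hGdef
  have hGmeas : ∀ n, MeasurableSet (G n) := by
    intro n
    have : G n = ⋂ k ∈ Set.Iic n, (P k ⁻¹' {0})ᶜ := by
      ext ω; simp [hGdef]
    rw [this]
    exact MeasurableSet.biInter (Set.to_countable _)
      (fun k _ => ((hPmeas k) (measurableSet_singleton 0)).compl)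
  set J : ℕ → Ω → ℝ := fun n ω => if ω ∈ G n then 1 else 0 with hJdef
  have hJmeas : ∀ n, Measurable (J n) :=
    fun n => Measurable.ite (hGmeas n) measurable_const measurable_const
  have hJ0 : ∀ n ω, 0 ≤ J n ω := by
    intro n ω; simp only [hJdef]; split_ifs <;> norm_num
  have hJ1 : ∀ n ω, J n ω ≤ 1 := by
    intro n ω; simp only [hJdef]; split_ifs <;> norm_num
  have hJabs : ∀ n ω, |J n ω| ≤ 1 := by
    intro n ω; rw [abs_of_nonneg (hJ0 n ω)]; exact hJ1 n ω
  -- a.e. the steps are among the m vectors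
  have hstep_meas : ∀ n (k : Fin m), MeasurableSet {ω | ξ n ω = step m k} := by
    intro n k
    exact hmeas n (measurableSet_singleton (step m k))
  have hF1 : ∀ᵐ ω ∂μ, ∀ n, ∃ k : Fin m, ξ n ω = step m k := by
    rw [ae_all_iff]
    intro n
    have hdisj : Pairwise (Function.onFun Disjoint (fun k : Fin m => {ω | ξ n ω = step m k})) := by
      intro k k' hkk'
      refine Set.disjoint_left.mpr fun ω h1 h2 => ?_
      exact hkk' (step_inj m hm (h1.symm.trans h2 : step m k = step m k'))
    have hU : μ (⋃ k : Fin m, {ω | ξ n ω = step m k}) = 1 := by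
      rw [measure_iUnion hdisj (fun k => hstep_meas n k)]
      simp only [hunif n]
      rw [tsum_fintype]
      simp only [Finset.sum_const, Finset.card_univ, Fintype.card_fin, nsmul_eq_mul]
      rw [ENNReal.mul_div_cancel' (by exact_mod_cast (by omega : m ≠ 0)) (by simp)]
    have hcompl : μ (⋃ k : Fin m, {ω | ξ n ω = step m k})ᶜ = 0 := by
      rw [measure_compl (MeasurableSet.iUnion (fun k => hstep_meas n k)) (measure_ne_top μ _), hU]
      simp
    filter_upwards [(MeasureTheory.mem_ae_iff).mpr hcompl] with ω hω
    simpa [Set.mem_iUnion] using hω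
  -- coordinate bound
  set M : ℤ := (∑ r, (a r : ℤ)) with hM
  have hMle : ∀ j', (a j' : ℤ) ≤ M := by
    intro j'
    exact Finset.single_le_sum (f := fun r => (a r : ℤ)) (fun r _ => by positivity) (Finset.mem_univ j')
  have hbd : ∀ᵐ ω ∂μ, ∀ n (j' : Fin (m-1)), |A n ω j'| ≤ M + n := by
    filter_upwards [hF1] with ω hω
    intro n
    induction n with
    | zero =>
      intro j'; rw [hA0 ω j']
      rw [abs_of_nonneg (by positivity)]
      simpa using hMle j'
    | succ n ih =>
      intro j'
      obtain ⟨k, hk⟩ := hω n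
      rw [hA n ω, Pi.add_apply, hk]
      have h1 : |step m k j'| ≤ 1 := step_bd m k j'
      have h2 := ih j'
      have := abs_add_le (A n ω j') (step m k j')
      push_cast
      omega
  -- positivity on the good event
  have hXYge1 : ∀ᵐ ω ∂μ, ∀ n, ω ∈ G n → 1 ≤ A n ω i ∧ 1 ≤ A n ω j := by
    filter_upwards [hF1] with ω hω
    intro n
    induction n with
    | zero =>
      intro _
      rw [hA0 ω i, hA0 ω j]
      constructor <;> [exact_mod_cast ha i; exact_mod_cast ha j]
    | succ n ih =>
      intro hG
      have hGn : ω ∈ G n := fun k hk => hG k (hk.trans (Nat.le_succ n))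
      obtain ⟨hXi, hXj⟩ := ih hGn
      obtain ⟨k0, hk0⟩ := hω n
      have hAi : A (n+1) ω i = A n ω i + step m k0 i := by rw [hA n ω]; simp [hk0]
      have hAj : A (n+1) ω j = A n ω j + step m k0 j := by rw [hA n ω]; simp [hk0]
      have h1 : |step m k0 i| ≤ 1 := step_bd m k0 i
      have h2 : |step m k0 j| ≤ 1 := step_bd m k0 j
      have h1' := abs_le.mp h1
      have h2' := abs_le.mp h2
      have hne : A (n+1) ω i * A (n+1) ω j ≠ 0 := hG (n+1) le_rfl
      have hnei : A (n+1) ω i ≠ 0 := fun h => hne (by rw [h]; ring)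
      have hnej : A (n+1) ω j ≠ 0 := fun h => hne (by rw [h]; ring)
      constructor <;> omega
  -- integrability helper
  have int_bd : ∀ (g : Ω → ℝ) (C : ℝ), Measurable g → (∀ᵐ ω ∂μ, |g ω| ≤ C) → Integrable g μ := by
    intro g C hg hb
    refine (integrable_const C).mono' hg.aestronglyMeasurable ?_
    filter_upwards [hb] with ω h
    rwa [Real.norm_eq_abs]
  have hintJ : ∀ n, Integrable (J n) μ :=
    fun n => int_bd (J n) 1 (hJmeas n) (Eventually.of_forall fun ω => hJabs n ω)
  have hintPJ : ∀ n, Integrable (fun ω => (P n ω : ℝ) * J n ω) μ := by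
    intro n
    refine int_bd _ (((M+n)*(M+n) : ℤ) : ℝ)
      ((measurable_of_countable (fun z : ℤ => (z:ℝ))|>.comp (hPmeas n)).mul (hJmeas n)) ?_
    filter_upwards [hbd] with ω hω
    have h1 := hω n i; have h2 := hω n j
    rw [abs_mul]
    have : |(P n ω : ℝ)| ≤ (((M+n)*(M+n) : ℤ) : ℝ) := by
      rw [← Int.cast_abs]
      have : |P n ω| ≤ (M+n)*(M+n) := by
        simp only [hPdef]
        rw [abs_mul]
        have hn1 : (0:ℤ) ≤ M + n := le_trans (abs_nonneg _) h1
        exact mul_le_mul h1 h2 (abs_nonneg _) hn1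
      exact_mod_cast this
    calc |(P n ω : ℝ)| * |J n ω| ≤ |(P n ω : ℝ)| * 1 :=
          mul_le_mul_of_nonneg_left (hJabs n ω) (abs_nonneg _)
      _ = |(P n ω : ℝ)| := mul_one _
      _ ≤ _ := this
  have hintQJ : ∀ n, Integrable (fun ω => (Q n ω : ℝ) * J n ω) μ := by
    intro n
    refine int_bd _ (((M+n)*(M+n)*((M+n)+(M+n)) : ℤ) : ℝ)
      ((measurable_of_countable (fun z : ℤ => (z:ℝ))|>.comp (hQmeas n)).mul (hJmeas n)) ?_
    filter_upwards [hbd] with ω hω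
    have h1 := hω n i; have h2 := hω n j
    rw [abs_mul]
    have hn1 : (0:ℤ) ≤ M + n := le_trans (abs_nonneg _) h1
    have hQb : |Q n ω| ≤ (M+n)*(M+n)*((M+n)+(M+n)) := by
      simp only [hQdef]
      rw [abs_mul, abs_mul]
      refine mul_le_mul (mul_le_mul h1 h2 (abs_nonneg _) hn1)
        (le_trans (abs_add_le _ _) (add_le_add h1 h2)) (abs_nonneg _) (by positivity)
    have : |(Q n ω : ℝ)| ≤ (((M+n)*(M+n)*((M+n)+(M+n)) : ℤ) : ℝ) := by
      rw [← Int.cast_abs]; exact_mod_cast hQb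
    calc |(Q n ω : ℝ)| * |J n ω| ≤ |(Q n ω : ℝ)| * 1 :=
          mul_le_mul_of_nonneg_left (hJabs n ω) (abs_nonneg _)
      _ = |(Q n ω : ℝ)| := mul_one _
      _ ≤ _ := this
  -- independence of ξ n from the past
  have hIndW : ∀ n, IndepFun (ξ n) (fun ω (l : Fin n) => ξ l ω) μ := by
    intro n
    have h := hindep.indepFun_finset {n} (Finset.range n)
      (by simp [Finset.disjoint_left]) hmeas
    have h2 := h.comp
      (φ := fun g : ({x // x ∈ ({n} : Finset ℕ)} → (Fin (m-1) → ℤ)) => g ⟨n, Finset.mem_singleton_self n⟩)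
      (ψ := fun g : ({x // x ∈ Finset.range n} → (Fin (m-1) → ℤ)) =>
        fun l : Fin n => g ⟨(l : ℕ), Finset.mem_range.mpr l.2⟩)
      (measurable_of_countable _) (measurable_of_countable _)
    exact h2

  -- the key one-step computation
  have key : ∀ (n : ℕ) (f : (Fin (m-1) → ℤ) → ℤ) (c : ℤ),
      (∀ x, ∑ k : Fin m, f (x + step m k) = (m:ℤ) * f x + c) →
      ∀ (Bf : ℤ → ℤ), (∀ (R : ℤ) x, (∀ j', |x j'| ≤ R) → |f x| ≤ Bf R) →
      ∫ ω, (f (A (n+1) ω) : ℝ) * J n ω ∂μ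
        = ∫ ω, (f (A n ω) : ℝ) * J n ω ∂μ + ((c:ℝ)/m) * ∫ ω, J n ω ∂μ := by
    intro n f c hf Bf hBf
    set W : Ω → (Fin n → Fin (m-1) → ℤ) := fun ω l => ξ l ω with hW
    have hWmeas : Measurable W := measurable_pi_iff.mpr fun l => hmeas l
    set An' : ℕ → (Fin n → Fin (m-1) → ℤ) → (Fin (m-1) → ℤ) :=
      fun k' v => (fun j' => (a j' : ℤ)) + ∑ l ∈ Finset.range k',
        (if h : l < n then v ⟨l, h⟩ else 0) with hAn'
    have hAn'W : ∀ k', k' ≤ n → ∀ ω, A k' ω = An' k' (W ω) := by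
      intro k' hk' ω
      rw [hAsum k' ω]
      simp only [hAn']
      congr 1
      refine (Finset.sum_congr rfl fun l hl => ?_)
      rw [dif_pos (lt_of_lt_of_le (Finset.mem_range.mp hl) hk')]
    set Jf : (Fin n → Fin (m-1) → ℤ) → ℝ :=
      fun v => if (∀ k' ≤ n, An' k' v i * An' k' v j ≠ 0) then 1 else 0 with hJf
    have hJfW : ∀ ω, J n ω = Jf (W ω) := by
      intro ω
      have hiff : (ω ∈ G n) ↔ (∀ k' ≤ n, An' k' (W ω) i * An' k' (W ω) j ≠ 0) := by
        constructor
        · intro h k' hk'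
          rw [← hAn'W k' hk' ω]
          exact h k' hk'
        · intro h k' hk'
          have := h k' hk'
          rwa [← hAn'W k' hk' ω] at this
      simp only [hJdef, hJf]
      exact if_congr hiff rfl rfl
    set g : Fin m → (Fin n → Fin (m-1) → ℤ) → ℝ :=
      fun k v => (f (An' n v + step m k) : ℝ) * Jf v with hg
    have hgmeas : ∀ k, Measurable (g k) := fun k => measurable_of_countable _
    have hgW : ∀ k ω, g k (W ω) = (f (A n ω + step m k) : ℝ) * J n ω := by
      intro k ω
      simp only [hg]
      rw [← hAn'W n le_rfl ω, ← hJfW ω]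
    have hintg : ∀ k : Fin m, Integrable (fun ω => g k (W ω)) μ := by
      intro k
      refine int_bd _ ((Bf (M + n + 1) : ℤ) : ℝ) ((hgmeas k).comp hWmeas) ?_
      filter_upwards [hbd] with ω hω
      rw [hgW k ω, abs_mul]
      have hco : ∀ j', |(A n ω + step m k) j'| ≤ M + n + 1 := by
        intro j'
        have h1 := hω n j'
        have h2 := step_bd m k j'
        have := abs_add_le (A n ω j') (step m k j')
        simp only [Pi.add_apply]
        omega
      have hfb : |f (A n ω + step m k)| ≤ Bf (M + n + 1) := hBf _ _ hco
      have hfb' : |(f (A n ω + step m k) : ℝ)| ≤ ((Bf (M + n + 1) : ℤ) : ℝ) := by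
        rw [← Int.cast_abs]; exact_mod_cast hfb
      calc |(f (A n ω + step m k) : ℝ)| * |J n ω|
          ≤ |(f (A n ω + step m k) : ℝ)| * 1 :=
            mul_le_mul_of_nonneg_left (hJabs n ω) (abs_nonneg _)
        _ = _ := mul_one _
        _ ≤ _ := hfb'
    have hintfJ : Integrable (fun ω => (f (A n ω) : ℝ) * J n ω) μ := by
      refine int_bd _ ((Bf (M + n) : ℤ) : ℝ)
        (((measurable_of_countable (fun z : ℤ => (z:ℝ))).comp
          ((measurable_of_countable f).comp (hAmeas n))).mul (hJmeas n)) ?_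
      filter_upwards [hbd] with ω hω
      rw [abs_mul]
      have hfb : |f (A n ω)| ≤ Bf (M + n) := hBf _ _ (fun j' => hω n j')
      have hfb' : |(f (A n ω) : ℝ)| ≤ ((Bf (M + n) : ℤ) : ℝ) := by
        rw [← Int.cast_abs]; exact_mod_cast hfb
      calc |(f (A n ω) : ℝ)| * |J n ω| ≤ |(f (A n ω) : ℝ)| * 1 :=
            mul_le_mul_of_nonneg_left (hJabs n ω) (abs_nonneg _)
        _ = _ := mul_one _
        _ ≤ _ := hfb'
    set ind : Fin m → Ω → ℝ := fun k ω => if ξ n ω = step m k then 1 else 0 with hind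
    have hindmeas : ∀ k, Measurable (ind k) :=
      fun k => Measurable.ite (hstep_meas n k) measurable_const measurable_const
    have hindabs : ∀ k ω, |ind k ω| ≤ 1 := by
      intro k ω; simp only [hind]; split_ifs <;> norm_num
    have hindint : ∀ k, Integrable (ind k) μ :=
      fun k => int_bd _ 1 (hindmeas k) (Eventually.of_forall (hindabs k))
    have hIint : ∀ k, ∫ ω, ind k ω ∂μ = 1/(m:ℝ) := by
      intro k
      have heq : ind k = Set.indicator {ω | ξ n ω = step m k} (fun _ => (1:ℝ)) := by
        funext ω
        rw [Set.indicator_apply]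
        simp only [hind, Set.mem_setOf_eq]
      rw [heq, integral_indicator_const _ (hstep_meas n k), smul_eq_mul, mul_one, measureReal_def, hunif n k,
        ENNReal.toReal_div, ENNReal.toReal_one, ENNReal.toReal_natCast]
    have hintprod : ∀ k : Fin m, Integrable (fun ω => ind k ω * g k (W ω)) μ := by
      intro k
      refine int_bd _ ((Bf (M + n + 1) : ℤ) : ℝ)
        ((hindmeas k).mul ((hgmeas k).comp hWmeas)) ?_
      have h := (hintg k)
      filter_upwards [hbd] with ω hω
      rw [abs_mul]
      rw [hgW k ω, abs_mul]
      have hco : ∀ j', |(A n ω + step m k) j'| ≤ M + n + 1 := by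
        intro j'
        have h1 := hω n j'
        have h2 := step_bd m k j'
        have h3 := abs_add_le (A n ω j') (step m k j')
        simp only [Pi.add_apply]
        omega
      have hfb' : |(f (A n ω + step m k) : ℝ)| ≤ ((Bf (M + n + 1) : ℤ) : ℝ) := by
        rw [← Int.cast_abs]; exact_mod_cast hBf _ _ hco
      have hB0 : (0:ℝ) ≤ ((Bf (M + n + 1) : ℤ) : ℝ) := le_trans (abs_nonneg _) hfb'
      calc |ind k ω| * (|(f (A n ω + step m k) : ℝ)| * |J n ω|)
          ≤ 1 * (((Bf (M + n + 1) : ℤ) : ℝ) * 1) := by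
            refine mul_le_mul (hindabs k ω) ?_ (by positivity) zero_le_one
            exact mul_le_mul hfb' (hJabs n ω) (abs_nonneg _) hB0
        _ = _ := by ring
    have step1 : (fun ω => (f (A (n+1) ω) : ℝ) * J n ω)
        =ᵐ[μ] (fun ω => ∑ k : Fin m, ind k ω * g k (W ω)) := by
      filter_upwards [hF1] with ω hω
      obtain ⟨k0, hk0⟩ := hω n
      rw [Finset.sum_eq_single k0]
      · have hone : ind k0 ω = 1 := by simp only [hind]; rw [if_pos hk0]
        rw [hone, one_mul, hgW k0 ω, hA n ω, hk0]
      · intro b _ hb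
        have hzero : ind b ω = 0 := by
          simp only [hind]
          rw [if_neg]
          rw [hk0]
          exact fun hh => hb ((step_inj m hm hh).symm)
        rw [hzero, zero_mul]
      · intro hk0'; exact absurd (Finset.mem_univ k0) hk0'
    rw [integral_congr_ae step1, integral_finset_sum _ (fun k _ => hintprod k)]
    have hik : ∀ k : Fin m, ∫ ω, ind k ω * g k (W ω) ∂μ
        = (1/(m:ℝ)) * ∫ ω, g k (W ω) ∂μ := by
      intro k
      have hI : IndepFun (ind k) (fun ω => g k (W ω)) μ := by
        have h2 := (hIndW n).comp
          (φ := fun z : (Fin (m-1) → ℤ) => if z = step m k then (1:ℝ) else 0)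
          (ψ := g k) (measurable_of_countable _) (hgmeas k)
        exact h2
      have h3 := hI.integral_fun_mul_eq_mul_integral (hindint k).aestronglyMeasurable (hintg k).aestronglyMeasurable
      have h4 : ∫ ω, ind k ω * g k (W ω) ∂μ = (∫ ω, ind k ω ∂μ) * ∫ ω, g k (W ω) ∂μ := h3
      rw [h4, hIint k]
    rw [Finset.sum_congr rfl (fun k _ => hik k), ← Finset.mul_sum,
      ← integral_finset_sum _ (fun k _ => hintg k)]
    have step4 : (fun ω => ∑ k : Fin m, g k (W ω))
        =ᵐ[μ] (fun ω => (m:ℝ) * ((f (A n ω) : ℝ) * J n ω) + (c:ℝ) * J n ω) := by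
      refine Eventually.of_forall fun ω => ?_
      have h5 : ∀ k : Fin m, g k (W ω) = (f (A n ω + step m k) : ℝ) * J n ω := fun k => hgW k ω
      show (∑ k : Fin m, g k (W ω)) = (m:ℝ) * ((f (A n ω) : ℝ) * J n ω) + (c:ℝ) * J n ω
      rw [Finset.sum_congr rfl (fun k _ => h5 k), ← Finset.sum_mul]
      rw [show (∑ k : Fin m, ((f (A n ω + step m k) : ℤ) : ℝ))
          = ((∑ k : Fin m, f (A n ω + step m k) : ℤ) : ℝ) by push_cast; ring]
      rw [hf (A n ω)]
      push_cast
      ring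
    rw [integral_congr_ae step4, integral_add ((hintfJ.const_mul _)) ((hintJ n).const_mul _),
      integral_const_mul, integral_const_mul]
    field_simp

  -- J swap identities
  have hJsucc : ∀ n ω, P (n+1) ω ≠ 0 → J (n+1) ω = J n ω := by
    intro n ω hz
    simp only [hJdef]
    refine if_congr ?_ rfl rfl
    simp only [hGdef, Set.mem_setOf_eq]
    constructor
    · intro h k hk; exact h k (hk.trans (Nat.le_succ n))
    · intro h k hk
      rcases Nat.lt_succ_iff_lt_or_eq.mp (Nat.lt_succ_of_le hk) with hlt | rfl
      · exact h k (Nat.lt_succ_iff.mp hlt)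
      · exact hz
  have hJzero : ∀ n ω, P (n+1) ω = 0 → J (n+1) ω = 0 := by
    intro n ω hz
    simp only [hJdef]
    rw [if_neg]
    simp only [hGdef, Set.mem_setOf_eq]
    push_neg
    exact ⟨n+1, le_rfl, hz⟩
  have hswapP : ∀ n ω, (P (n+1) ω : ℝ) * J (n+1) ω = (P (n+1) ω : ℝ) * J n ω := by
    intro n ω
    by_cases hz : P (n+1) ω = 0
    · rw [hz]; simp
    · rw [hJsucc n ω hz]
  have hswapQ : ∀ n ω, (Q (n+1) ω : ℝ) * J (n+1) ω = (Q (n+1) ω : ℝ) * J n ω := by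
    intro n ω
    by_cases hz : P (n+1) ω = 0
    · have hQz : Q (n+1) ω = 0 := by
        have : Q (n+1) ω = P (n+1) ω * (A (n+1) ω i + A (n+1) ω j) := by
          simp only [hPdef, hQdef]
        rw [this, hz, zero_mul]
      rw [hQz]; simp
    · rw [hJsucc n ω hz]
  -- sequences
  set t : ℕ → ℝ := fun n => ∫ ω, J n ω ∂μ with htdef
  set p : ℕ → ℝ := fun n => ∫ ω, (P n ω : ℝ) * J n ω ∂μ with hpdef
  set q : ℕ → ℝ := fun n => ∫ ω, (Q n ω : ℝ) * J n ω ∂μ with hqdef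
  have hp_rec : ∀ n, p (n+1) = p n - (1/(m:ℝ)) * t n := by
    intro n
    have e2 := key n (fun x => x i * x j) (-1)
      (fun x => by
        show ∑ k : Fin m, (x + step m k) i * (x + step m k) j = (m:ℤ) * (x i * x j) + (-1)
        rw [sumP m i j hij x]; ring)
      (fun R => R*R)
      (fun R x hx => by
        show |x i * x j| ≤ R * R
        rw [abs_mul]
        exact mul_le_mul (hx i) (hx j) (abs_nonneg _) ((abs_nonneg _).trans (hx i)))
    have e1 : p (n+1) = ∫ ω, ((fun x : Fin (m-1) → ℤ => x i * x j) (A (n+1) ω) : ℝ) * J n ω ∂μ := by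
      rw [show p (n+1) = ∫ ω, (P (n+1) ω : ℝ) * J (n+1) ω ∂μ from rfl]
      exact integral_congr_ae (Filter.Eventually.of_forall fun ω => hswapP n ω)
    rw [e1, e2]
    rw [show (∫ ω, ((fun x : Fin (m-1) → ℤ => x i * x j) (A n ω) : ℝ) * J n ω ∂μ) = p n from rfl,
      show (∫ ω, J n ω ∂μ) = t n from rfl]
    push_cast
    ring
  have hq_rec : ∀ n, q (n+1) = q n := by
    intro n
    have e2 := key n (fun x => x i * x j * (x i + x j)) 0
      (fun x => by
        show ∑ k : Fin m, (x + step m k) i * (x + step m k) j * ((x + step m k) i + (x + step m k) j)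
            = (m:ℤ) * (x i * x j * (x i + x j)) + 0
        rw [sumQ m i j hij x]; ring)
      (fun R => R*R*(R+R))
      (fun R x hx => by
        show |x i * x j * (x i + x j)| ≤ R * R * (R + R)
        have hR0 : (0:ℤ) ≤ R := (abs_nonneg _).trans (hx i)
        rw [abs_mul, abs_mul]
        refine mul_le_mul (mul_le_mul (hx i) (hx j) (abs_nonneg _) hR0)
          (le_trans (abs_add_le _ _) (add_le_add (hx i) (hx j))) (abs_nonneg _) (by positivity))
    have e1 : q (n+1) = ∫ ω, ((fun x : Fin (m-1) → ℤ => x i * x j * (x i + x j)) (A (n+1) ω) : ℝ) * J n ω ∂μ := by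
      rw [show q (n+1) = ∫ ω, (Q (n+1) ω : ℝ) * J (n+1) ω ∂μ from rfl]
      exact integral_congr_ae (Filter.Eventually.of_forall fun ω => hswapQ n ω)
    rw [e1, e2]
    rw [show (∫ ω, ((fun x : Fin (m-1) → ℤ => x i * x j * (x i + x j)) (A n ω) : ℝ) * J n ω ∂μ) = q n from rfl]
    push_cast
    ring
  -- initial values
  have hJ0all : ∀ ω, J 0 ω = 1 := by
    intro ω
    simp only [hJdef]
    rw [if_pos]
    simp only [hGdef, Set.mem_setOf_eq]
    intro k hk
    have hk0 : k = 0 := Nat.le_zero.mp hk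
    subst hk0
    show A 0 ω i * A 0 ω j ≠ 0
    rw [hA0 ω i, hA0 ω j]
    exact mul_ne_zero (by exact_mod_cast (ha i).ne') (by exact_mod_cast (ha j).ne')
  have hp0 : p 0 = (a i : ℝ) * (a j : ℝ) := by
    rw [show p 0 = ∫ ω, (P 0 ω : ℝ) * J 0 ω ∂μ from rfl]
    have hconst : ∀ ω, (P 0 ω : ℝ) * J 0 ω = (a i : ℝ) * (a j : ℝ) := by
      intro ω
      rw [hJ0all ω, mul_one]
      show ((A 0 ω i * A 0 ω j : ℤ) : ℝ) = _
      rw [hA0 ω i, hA0 ω j]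
      push_cast
      ring
    rw [integral_congr_ae (Filter.Eventually.of_forall hconst), integral_const]
    simp
  have hq0 : q 0 = (a i : ℝ) * (a j : ℝ) * ((a i : ℝ) + (a j : ℝ)) := by
    rw [show q 0 = ∫ ω, (Q 0 ω : ℝ) * J 0 ω ∂μ from rfl]
    have hconst : ∀ ω, (Q 0 ω : ℝ) * J 0 ω = (a i : ℝ) * (a j : ℝ) * ((a i : ℝ) + (a j : ℝ)) := by
      intro ω
      rw [hJ0all ω, mul_one]
      show ((A 0 ω i * A 0 ω j * (A 0 ω i + A 0 ω j) : ℤ) : ℝ) = _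
      rw [hA0 ω i, hA0 ω j]
      push_cast
      ring
    rw [integral_congr_ae (Filter.Eventually.of_forall hconst), integral_const]
    simp
  have ht_nonneg : ∀ n, 0 ≤ t n := fun n => integral_nonneg (hJ0 n)
  have hpt : ∀ n, t n ≤ p n := by
    intro n
    refine integral_mono_ae (hintJ n) (hintPJ n) ?_
    filter_upwards [hXYge1] with ω hω
    by_cases hg : ω ∈ G n
    · obtain ⟨h1, h2⟩ := hω n hg
      have hJ1' : J n ω = 1 := by simp only [hJdef]; rw [if_pos hg]
      rw [hJ1', mul_one]
      have hPge : (1:ℤ) ≤ P n ω := by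
        show (1:ℤ) ≤ A n ω i * A n ω j
        nlinarith
      calc (1:ℝ) ≤ ((P n ω : ℤ) : ℝ) := by exact_mod_cast hPge
        _ = _ := rfl
    · have hJz : J n ω = 0 := by simp only [hJdef]; rw [if_neg hg]
      rw [hJz, mul_zero]
  have hp_nonneg : ∀ n, 0 ≤ p n := fun n => (ht_nonneg n).trans (hpt n)
  have htele : ∀ n, (m:ℝ) * p n = (m:ℝ) * p 0 - ∑ k ∈ Finset.range n, t k := by
    intro n
    induction n with
    | zero => simp
    | succ n ih =>
      rw [hp_rec n, Finset.sum_range_succ]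
      have hcan : (m:ℝ) * (1/(m:ℝ)) = 1 := by field_simp
      calc (m:ℝ) * (p n - 1/(m:ℝ) * t n) = (m:ℝ) * p n - ((m:ℝ) * (1/(m:ℝ))) * t n := by ring
        _ = (m:ℝ) * p n - t n := by rw [hcan]; ring
        _ = _ := by rw [ih]; ring
  have hsum_le : ∀ n, ∑ k ∈ Finset.range n, t k ≤ (m:ℝ) * p 0 := by
    intro n
    have h1 := htele n
    have h2 : 0 ≤ (m:ℝ) * p n := mul_nonneg (le_of_lt hmR) (hp_nonneg n)
    linarith
  have hsummable : Summable t := summable_of_sum_range_le ht_nonneg hsum_le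
  have ht0 : Tendsto t atTop (𝓝 0) := hsummable.tendsto_atTop_zero
  have hq_const : ∀ n, q n = q 0 := by
    intro n
    induction n with
    | zero => rfl
    | succ n ih => rw [hq_rec n, ih]
  -- the crucial bound p n ≤ N^2 t n + q0 / (2N)
  have hZkey : ∀ X Y NN : ℤ, 1 ≤ X → 1 ≤ Y → 1 ≤ NN →
      2*NN*(X*Y) ≤ 2*NN^3 + X*Y*(X+Y) := by
    intro X Y NN hX hY hNN
    rcases le_or_gt (X*Y) (NN^2) with h | h
    · have h0 : 0 ≤ X*Y*(X+Y) :=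
        mul_nonneg (mul_nonneg (by linarith) (by linarith)) (by linarith)
      nlinarith
    · have hs : 2*NN + 1 ≤ X + Y := by nlinarith [sq_nonneg (X - Y), sq_nonneg (X + Y)]
      nlinarith [mul_pos (show (0:ℤ) < X by linarith) (show (0:ℤ) < Y by linarith)]
  have hNbound : ∀ N : ℕ, 1 ≤ N → ∀ n, 2*(N:ℝ)*p n ≤ 2*(N:ℝ)^3*t n + q 0 := by
    intro N hN n
    have hae : ∀ᵐ ω ∂μ, 2*(N:ℝ)*((P n ω:ℝ) * J n ω)
        ≤ 2*(N:ℝ)^3 * J n ω + (Q n ω:ℝ) * J n ω := by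
      filter_upwards [hXYge1] with ω hω
      by_cases hg : ω ∈ G n
      · have hJ1' : J n ω = 1 := by simp only [hJdef]; rw [if_pos hg]
        rw [hJ1']
        obtain ⟨h1, h2⟩ := hω n hg
        have hZ := hZkey (A n ω i) (A n ω j) (N:ℤ) h1 h2 (by exact_mod_cast hN)
        have hZR : 2*(N:ℝ)*(((A n ω i * A n ω j : ℤ)):ℝ)
            ≤ 2*(N:ℝ)^3 + (((A n ω i * A n ω j * (A n ω i + A n ω j) : ℤ)):ℝ) := by
          exact_mod_cast hZ
        rw [show P n ω = A n ω i * A n ω j from rfl,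
          show Q n ω = A n ω i * A n ω j * (A n ω i + A n ω j) from rfl]
        simp only [mul_one]
        exact_mod_cast hZR
      · have hJz : J n ω = 0 := by simp only [hJdef]; rw [if_neg hg]
        rw [hJz]
        simp
    have hint1 : Integrable (fun ω => 2*(N:ℝ)*((P n ω:ℝ) * J n ω)) μ := (hintPJ n).const_mul _
    have hint2 : Integrable (fun ω => 2*(N:ℝ)^3 * J n ω + (Q n ω:ℝ) * J n ω) μ :=
      ((hintJ n).const_mul _).add (hintQJ n)
    have hmono := integral_mono_ae hint1 hint2 hae
    rw [integral_const_mul, integral_add ((hintJ n).const_mul _) (hintQJ n), integral_const_mul] at hmono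
    have : q n = q 0 := hq_const n
    rw [show (∫ ω, J n ω ∂μ) = t n from rfl, show (∫ ω, (P n ω:ℝ) * J n ω ∂μ) = p n from rfl,
      show (∫ ω, (Q n ω:ℝ) * J n ω ∂μ) = q n from rfl, this] at hmono
    exact hmono
  -- p tends to 0
  have hptend : Tendsto p atTop (𝓝 0) := by
    refine Metric.tendsto_atTop.mpr fun ε hε => ?_
    obtain ⟨N, hNgt⟩ := exists_nat_gt (max 1 (q 0 / ε))
    have hN1R : (1:ℝ) < N := lt_of_le_of_lt (le_max_left _ _) hNgt
    have hN1 : 1 ≤ N := by exact_mod_cast hN1R.le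
    have hNpos : (0:ℝ) < N := lt_trans one_pos hN1R
    have hq0N : q 0 < ε * N := by
      have h := lt_of_le_of_lt (le_max_right 1 (q 0 / ε)) hNgt
      have := (div_lt_iff₀ hε).mp h
      linarith [this]
    have hδ : (0:ℝ) < ε / (2*(N:ℝ)^2) := by positivity
    obtain ⟨N0, hN0⟩ := Filter.eventually_atTop.mp (ht0.eventually (gt_mem_nhds hδ))
    refine ⟨N0, fun n hn => ?_⟩
    rw [Real.dist_eq, sub_zero, abs_of_nonneg (hp_nonneg n)]
    have hb := hNbound N hN1 n
    have htn := hN0 n hn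
    have hc1 : 2*(N:ℝ)^3 * t n < 2*(N:ℝ)^3 * (ε / (2*(N:ℝ)^2)) := by
      apply mul_lt_mul_of_pos_left htn (by positivity)
    have hc2 : 2*(N:ℝ)^3 * (ε / (2*(N:ℝ)^2)) = ε * N := by field_simp
    have hc3 : 2*(N:ℝ)*p n < 2 * (ε * N) := by
      rw [hc2] at hc1; linarith
    have hc4 : 2 * (ε * N) = 2*(N:ℝ)*ε := by ring
    rw [hc4] at hc3
    exact lt_of_mul_lt_mul_left hc3 (by positivity)
  -- partial sums converge to m * p 0
  have hsum_tend : Tendsto (fun n => ∑ k ∈ Finset.range n, t k) atTop (𝓝 ((m:ℝ) * p 0)) := by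
    have heq : (fun n => ∑ k ∈ Finset.range n, t k) = fun n => (m:ℝ) * p 0 - (m:ℝ) * p n := by
      funext n
      have := htele n
      linarith
    rw [heq]
    have h1 : Tendsto (fun n => (m:ℝ) * p n) atTop (𝓝 ((m:ℝ) * 0)) := hptend.const_mul _
    rw [mul_zero] at h1
    have h2 := (tendsto_const_nhds (x := (m:ℝ) * p 0) (f := atTop (α := ℕ))).sub h1
    rw [sub_zero] at h2
    exact h2
  have htsum : ∑' k, t k = (m:ℝ) * p 0 :=
    tendsto_nhds_unique hsummable.hasSum.tendsto_sum_nat hsum_tend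
  -- translate to the measure side
  have hτ : ∀ n, μ (G n) = ENNReal.ofReal (t n) := by
    intro n
    have hind2 : J n = Set.indicator (G n) (fun _ => (1:ℝ)) := by
      funext ω
      rw [Set.indicator_apply]
    have htval : t n = (μ (G n)).toReal := by
      rw [show t n = ∫ ω, J n ω ∂μ from rfl, hind2,
        integral_indicator_const _ (hGmeas n), smul_eq_mul, mul_one, measureReal_def]
    rw [htval, ENNReal.ofReal_toReal (measure_ne_top μ _)]
  have hτ0 : Tendsto (fun n => μ (G n)) atTop (𝓝 0) := by
    have h1 := ENNReal.tendsto_ofReal ht0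
    rw [ENNReal.ofReal_zero] at h1
    have heq : (fun n => μ (G n)) = fun n => ENNReal.ofReal (t n) := funext hτ
    rw [heq]
    exact h1
  set U : Set Ω := {ω | ∃ k, P k ω = 0} with hUdef
  have hUmeas : MeasurableSet U := by
    have : U = ⋃ k, P k ⁻¹' {0} := by
      ext ω; simp [hUdef]
    rw [this]
    exact MeasurableSet.iUnion fun k => (hPmeas k) (measurableSet_singleton 0)
  have hUc : μ Uᶜ = 0 := by
    have hsub : ∀ n, Uᶜ ⊆ G n := by
      intro n ω hω k hk
      simp only [hUdef, Set.mem_compl_iff, Set.mem_setOf_eq, not_exists] at hω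
      exact hω k
    have hle : ∀ n, μ Uᶜ ≤ μ (G n) := fun n => measure_mono (hsub n)
    exact le_antisymm (ge_of_tendsto' hτ0 hle) (by positivity)
  have hTset : ∀ n, {ω | n < T ω} = G n ∩ U := by
    intro n; ext ω
    simp only [Set.mem_setOf_eq, Set.mem_inter_iff, hUdef, hGdef]
    constructor
    · intro h
      have hSne : {k | P k ω = 0}.Nonempty := by
        by_contra hc
        rw [Set.not_nonempty_iff_eq_empty] at hc
        rw [hT ω] at h
        have hempty : sInf {n' | A n' ω i * A n' ω j = 0} = 0 := by
          rw [show {n' | A n' ω i * A n' ω j = 0} = {k | P k ω = 0} from rfl, hc]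
          exact Nat.sInf_empty
        omega
      have hmem : T ω ∈ {k | P k ω = 0} := by
        rw [hT ω]
        exact Nat.sInf_mem hSne
      refine ⟨fun k hk hPk => ?_, ⟨T ω, hmem⟩⟩
      have hTle : T ω ≤ k := by
        rw [hT ω]
        exact Nat.sInf_le hPk
      omega
    · rintro ⟨hG', k0, hk0⟩
      have hSne : {n' | A n' ω i * A n' ω j = 0}.Nonempty := ⟨k0, hk0⟩
      have hmem : T ω ∈ {n' | A n' ω i * A n' ω j = 0} := by
        rw [hT ω]
        exact Nat.sInf_mem hSne
      by_contra hc
      push_neg at hc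
      exact hG' (T ω) hc hmem
  have hμT : ∀ n, μ {ω | n < T ω} = ENNReal.ofReal (t n) := by
    intro n
    rw [hTset n, measure_inter_conull hUc, hτ n]
  have hTm : ∀ n : ℕ, MeasurableSet {ω | n < T ω} := by
    intro n
    rw [hTset n]
    exact (hGmeas n).inter hUmeas
  have hlint : ∫⁻ ω, (T ω : ℝ≥0∞) ∂μ = ∑' n, μ {ω | n < T ω} := by
    have hpt2 : ∀ ω, (T ω : ℝ≥0∞) = ∑' n, Set.indicator {ω' | n < T ω'} (fun _ => (1:ℝ≥0∞)) ω := by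
      intro ω
      have h1 : ∑' n, Set.indicator {ω' | n < T ω'} (fun _ => (1:ℝ≥0∞)) ω
          = ∑ n ∈ Finset.range (T ω), Set.indicator {ω' | n < T ω'} (fun _ => (1:ℝ≥0∞)) ω :=
        tsum_eq_sum (fun n hn =>
          Set.indicator_of_notMem (by simpa using Finset.mem_range.not.mp hn) _)
      have h2 : ∀ n ∈ Finset.range (T ω),
          Set.indicator {ω' | n < T ω'} (fun _ => (1:ℝ≥0∞)) ω = 1 :=
        fun n hn => Set.indicator_of_mem (show ω ∈ {ω' | n < T ω'} from Finset.mem_range.mp hn) _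
      rw [h1, Finset.sum_congr rfl h2]
      simp
    calc ∫⁻ ω, (T ω : ℝ≥0∞) ∂μ
        = ∫⁻ ω, ∑' n, Set.indicator {ω' | n < T ω'} (fun _ => (1:ℝ≥0∞)) ω ∂μ :=
          lintegral_congr fun ω => hpt2 ω
      _ = ∑' n, ∫⁻ ω, Set.indicator {ω' | n < T ω'} (fun _ => (1:ℝ≥0∞)) ω ∂μ :=
          lintegral_tsum fun n => (measurable_const.indicator (hTm n)).aemeasurable
      _ = ∑' n, μ {ω | n < T ω} := by
          refine tsum_congr fun n => ?_
          rw [lintegral_indicator (hTm n)]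
          simp
  rw [hlint]
  calc ∑' n, μ {ω | n < T ω} = ∑' n, ENNReal.ofReal (t n) := tsum_congr hμT
    _ = ENNReal.ofReal (∑' n, t n) := (ENNReal.ofReal_tsum_of_nonneg ht_nonneg hsummable).symm
    _ = ENNReal.ofReal ((m:ℝ) * p 0) := by rw [htsum]
    _ = ((m * a i * a j : ℕ) : ℝ≥0∞) := by
        rw [hp0]
        rw [show (m:ℝ) * ((a i:ℝ) * (a j:ℝ)) = ((m * a i * a j : ℕ):ℝ) by push_cast; ring]
        exact ENNReal.ofReal_natCast _
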